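/- An R-module E is finitely generated projective if and only if for every R-module E', the canonical map Hom_R(E, R) ⊗_R E' → Hom_R(E, E') (sending w ⊗ e' to the map e ↦ w(e) • e') is bijective. -/

import Mathlib

open TensorProduct

theorem aux_naturality {R : Type u} [CommRing R] {M N E' : Type u} [AddCommGroup M] [Module R M]
    [AddCommGroup N] [Module R N] [AddCommGroup E'] [Module R E'] (f : M →ₗ[R] N) :
    (LinearMap.lcomp R E' f) ∘ₗ dualTensorHom R N E' =
      dualTensorHom R M E' ∘ₗ (LinearMap.rTensor E' f.dualMap) := by
  ext w e' m
  simp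

/-- An `R`-module `E` is finitely generated projective if and only if for every `R`-module `E'`,
the canonical map `Hom_R(E, R) ⊗_R E' → Hom_R(E, E')`, `w ⊗ e' ↦ (e ↦ w e • e')`, is bijective. -/
theorem stmt0 {R : Type u} [CommRing R] (E : Type u) [AddCommGroup E] [Module R E] :
    (Module.Finite R E ∧ Module.Projective R E) ↔
      ∀ (E' : Type u) [AddCommGroup E'] [Module R E'],
        Function.Bijective (dualTensorHom R E E') := by
  constructor
  · rintro ⟨hfin, hproj⟩ E' _ _
    obtain ⟨n, f, g, hf, hg, hfg⟩ := Module.Finite.exists_comp_eq_id_of_projective R E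
    -- dualTensorHom on the free module is bijective
    have hfree : Function.Bijective (dualTensorHom R (Fin n → R) E') := by
      rw [← dualTensorHomEquivOfBasis_toLinearMap (Pi.basisFun R (Fin n))]
      exact (dualTensorHomEquivOfBasis (Pi.basisFun R (Fin n))).bijective
    have natf := aux_naturality (R := R) (E' := E') f
    have natg := aux_naturality (R := R) (E' := E') g
    have hdual : g.dualMap ∘ₗ f.dualMap = LinearMap.id := by
      ext w e
      have h0 : f (g e) = e := LinearMap.congr_fun hfg e
      simp [h0]
    have hsplit1 : (LinearMap.rTensor E' g.dualMap) ∘ₗ (LinearMap.rTensor E' f.dualMap)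
        = LinearMap.id := by
      rw [← LinearMap.rTensor_comp, hdual, LinearMap.rTensor_id]
    have hsplit2 : (LinearMap.lcomp R E' g) ∘ₗ (LinearMap.lcomp R E' f) = LinearMap.id := by
      ext h e
      have h0 : f (g e) = e := LinearMap.congr_fun hfg e
      simp [h0]
    constructor
    · intro x y hxy
      have h1 : (LinearMap.lcomp R E' f) (dualTensorHom R E E' x)
          = (LinearMap.lcomp R E' f) (dualTensorHom R E E' y) := by rw [hxy]
      rw [← LinearMap.comp_apply, ← LinearMap.comp_apply, natf,
        LinearMap.comp_apply, LinearMap.comp_apply] at h1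
      have h2 := hfree.injective h1
      have h3 := congrArg (LinearMap.rTensor E' g.dualMap) h2
      rwa [← LinearMap.comp_apply, ← LinearMap.comp_apply, hsplit1,
        LinearMap.id_apply, LinearMap.id_apply] at h3
    · intro h
      obtain ⟨x, hx⟩ := hfree.surjective ((LinearMap.lcomp R E' f) h)
      refine ⟨LinearMap.rTensor E' g.dualMap x, ?_⟩
      have h1 := congrArg (LinearMap.lcomp R E' g) hx
      rw [← LinearMap.comp_apply (LinearMap.lcomp R E' g) (LinearMap.lcomp R E' f), hsplit2,
        LinearMap.id_apply] at h1
      calc dualTensorHom R E E' (LinearMap.rTensor E' g.dualMap x)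
          = (dualTensorHom R E E' ∘ₗ LinearMap.rTensor E' g.dualMap) x := rfl
        _ = ((LinearMap.lcomp R E' g) ∘ₗ dualTensorHom R (Fin n → R) E') x := by rw [natg]
        _ = h := h1
  · intro H
    obtain ⟨x, hx⟩ := (H E).surjective LinearMap.id
    obtain ⟨S, rfl⟩ := TensorProduct.exists_finset x
    set f : (S → R) →ₗ[R] E := Fintype.linearCombination R (fun p : S => (p : Module.Dual R E × E).2)
    set s : E →ₗ[R] (S → R) := LinearMap.pi (fun p : S => (p : Module.Dual R E × E).1)
    have hcomp : f ∘ₗ s = LinearMap.id := by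
      ext e
      have h1 := LinearMap.congr_fun hx e
      simp only [map_sum, LinearMap.coe_sum, Finset.sum_apply, dualTensorHom_apply,
        LinearMap.id_coe, id_eq] at h1
      simp only [LinearMap.comp_apply, LinearMap.id_apply, f, s,
        Fintype.linearCombination_apply, LinearMap.pi_apply]
      calc ∑ p : S, (p : Module.Dual R E × E).1 e • (p : Module.Dual R E × E).2
          = ∑ p ∈ S, p.1 e • p.2 := Finset.sum_attach S fun p => p.1 e • p.2
        _ = e := h1
    have hsurj : Function.Surjective f := fun e =>
      ⟨s e, by rw [← LinearMap.comp_apply, hcomp, LinearMap.id_apply]⟩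
    exact ⟨Module.Finite.of_surjective f hsurj, Module.Projective.of_split s f hcomp⟩
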